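/- Let C be a finite candidate set and let S be a Condorcet consistent tournament solution on C. Then S-Approval satisfies the majority criterion: for every election E on C, if a candidate c is the source of strictly more than half of the votes of E, then c is an S-Approval winner of E. -/

import Mathlib

open scoped Classical

/-- A tournament on `C`: an irreflexive relation such that for all distinct
`a b` exactly one of `r a b`, `r b a` holds. -/
def IsTournament {C : Type*} (r : C → C → Prop) : Prop :=
  (∀ a : C, ¬ r a a) ∧ ∀ a b : C, a ≠ b → (r a b ↔ ¬ r b a)

/-- The `S`-Approval score of candidate `c` in election `E`: the number of
votes `T` of `E` with `c ∈ S T`. -/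
noncomputable def approvalScore {C : Type*} (S : (C → C → Prop) → Set C)
    (E : List (C → C → Prop)) (c : C) : ℕ :=
  (E.map (fun r => if c ∈ S r then 1 else 0)).sum

/-- The `S`-Approval winner set of election `E`: candidates of maximum score. -/
def winners {C : Type*} (S : (C → C → Prop) → Set C)
    (E : List (C → C → Prop)) : Set C :=
  {c | ∀ d : C, approvalScore S E d ≤ approvalScore S E c}

/-- `w` is the source (Condorcet winner) of the tournament `r`. -/
def IsSource {C : Type*} (r : C → C → Prop) (w : C) : Prop :=
  ∀ b : C, b ≠ w → r w b

/-- A tournament solution is Condorcet consistent if on every tournament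
having a source `w` it selects exactly `{w}`. -/
def CondorcetConsistent {C : Type*} (S : (C → C → Prop) → Set C) : Prop :=
  ∀ r : C → C → Prop, IsTournament r → ∀ w : C, IsSource r w → S r = {w}

/-- The number of votes of `E` in which `c` is the source. -/
noncomputable def sourceCount {C : Type*} (E : List (C → C → Prop)) (c : C) : ℕ :=
  (E.map (fun r => if IsSource r c then 1 else 0)).sum

lemma aux_h1 {C : Type*} (S : (C → C → Prop) → Set C)
    (hCC : CondorcetConsistent S) (c : C) :
    ∀ E : List (C → C → Prop), (∀ r ∈ E, IsTournament r) →
      sourceCount E c ≤ approvalScore S E c := by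
  intro E hE
  induction E with
  | nil => simp [sourceCount, approvalScore]
  | cons r t ih =>
    have ht : ∀ x ∈ t, IsTournament x := fun x hx => hE x (List.mem_cons_of_mem _ hx)
    have ih' := ih ht
    simp only [sourceCount, approvalScore, List.map_cons, List.sum_cons] at *
    by_cases hs : IsSource r c
    · have : S r = {c} := hCC r (hE r List.mem_cons_self) c hs
      simp [hs, this]; omega
    · simp [hs]; split <;> omega

lemma aux_h2 {C : Type*} (S : (C → C → Prop) → Set C)
    (hCC : CondorcetConsistent S) (c d : C) (hdc : d ≠ c) :
    ∀ E : List (C → C → Prop), (∀ r ∈ E, IsTournament r) →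
      approvalScore S E d + sourceCount E c ≤ E.length := by
  intro E hE
  induction E with
  | nil => simp [sourceCount, approvalScore]
  | cons r t ih =>
    have ht : ∀ x ∈ t, IsTournament x := fun x hx => hE x (List.mem_cons_of_mem _ hx)
    have ih' := ih ht
    simp only [sourceCount, approvalScore, List.map_cons, List.sum_cons, List.length_cons] at *
    by_cases hs : IsSource r c
    · have hsr : S r = {c} := hCC r (hE r List.mem_cons_self) c hs
      have : d ∉ S r := by rw [hsr]; simpa using hdc
      simp [hs, this]; omega
    · simp [hs]; split <;> omega

/-- `S`-Approval satisfies the majority criterion for every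
Condorcet consistent tournament solution `S`. -/
theorem stmt_16 {C : Type*} [Finite C] (S : (C → C → Prop) → Set C)
    (hS : ∀ r : C → C → Prop, IsTournament r → (S r).Nonempty)
    (hCC : CondorcetConsistent S)
    (E : List (C → C → Prop)) (hE : ∀ r ∈ E, IsTournament r)
    (c : C) (hmaj : E.length < 2 * sourceCount E c) :
    c ∈ winners S E := by
  intro d
  by_cases hdc : d = c
  · subst hdc; exact le_refl _
  have h1 := aux_h1 S hCC c E hE
  have h2 := aux_h2 S hCC c d hdc E hE
  omega
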